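/- The function f(x) = log Γ(x+1) / (x log x) is strictly increasing on (1, ∞), with limits 1 - γ as x → 1⁺ and 1 as x → ∞. -/

import Mathlib

open Real Set Filter Topology Finset

local notation "γ" => Real.eulerMascheroniConstant

noncomputable def phiF (x : ℝ) : ℝ := ∑' k : ℕ, 1 / (x + k + 1) ^ 2
noncomputable def phiF' (x : ℝ) : ℝ := ∑' k : ℕ, -2 / (x + k + 1) ^ 3
noncomputable def PsiF (x : ℝ) : ℝ := -γ + ∑' k : ℕ, (1 / ((k : ℝ) + 1) - 1 / (x + k + 1))
noncomputable def WF (x : ℝ) : ℝ :=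
  -γ * x + ∑' k : ℕ, (x / ((k : ℝ) + 1) - Real.log (1 + x / ((k : ℝ) + 1)))

lemma summable_base (p : ℕ) (hp : 2 ≤ p) : Summable (fun k : ℕ => 1 / ((k : ℝ) + 1) ^ p) := by
  have := (summable_nat_add_iff (f := fun n : ℕ => 1 / (n : ℝ) ^ p) 1).2
    ((Real.summable_one_div_nat_pow).2 hp)
  convert this using 2 with k
  push_cast
  · rfl
  · push_cast
    ring

lemma summable_S {x : ℝ} (hx : 0 ≤ x) (p : ℕ) (hp : 2 ≤ p) :
    Summable (fun k : ℕ => 1 / (x + (k : ℝ) + 1) ^ p) := by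
  refine Summable.of_nonneg_of_le (fun k => by positivity) (fun k => ?_) (summable_base p hp)
  have h1 : (0:ℝ) < ((k:ℝ) + 1) ^ p := by positivity
  apply div_le_div_of_nonneg_left (by norm_num) h1
  have hbk : (0:ℝ) ≤ (k:ℝ) + 1 := by positivity
  exact pow_le_pow_left₀ hbk (by linarith) p

lemma summable_SPsi {x : ℝ} (hx : 0 ≤ x) :
    Summable (fun k : ℕ => 1 / ((k : ℝ) + 1) - 1 / (x + (k : ℝ) + 1)) := by
  refine Summable.of_nonneg_of_le (fun k => ?_) (fun k => ?_)
    ((summable_base 2 le_rfl).mul_left x)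
  · have hk : (0:ℝ) < (k:ℝ) + 1 := by positivity
    have hk2 : (0:ℝ) < x + (k:ℝ) + 1 := by linarith
    rw [sub_nonneg]
    gcongr
    linarith
  · have hk : (0:ℝ) < (k:ℝ) + 1 := by positivity
    have hk2 : (0:ℝ) < x + (k:ℝ) + 1 := by linarith
    rw [div_sub_div _ _ hk.ne' hk2.ne']
    rw [div_le_iff₀ (by positivity), mul_comm x, mul_assoc, div_mul_eq_mul_div, le_div_iff₀ (by positivity)]
    ring_nf
    nlinarith [sq_nonneg ((k:ℝ)+1), Nat.cast_nonneg (α := ℝ) k]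

lemma log_one_add_ge {t : ℝ} (ht : 0 ≤ t) : t / (1 + t) ≤ Real.log (1 + t) := by
  have h1 : (0:ℝ) < 1 + t := by linarith
  have := Real.log_le_sub_one_of_pos (x := (1 + t)⁻¹) (by positivity)
  rw [Real.log_inv] at this
  have h2 : (1 + t)⁻¹ - 1 = -(t / (1 + t)) := by field_simp; ring
  linarith

lemma summable_SW {x : ℝ} (hx : 0 ≤ x) :
    Summable (fun k : ℕ => x / ((k : ℝ) + 1) - Real.log (1 + x / ((k : ℝ) + 1))) := by
  refine Summable.of_nonneg_of_le (fun k => ?_) (fun k => ?_)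
    (((summable_base 2 le_rfl).mul_left (x^2)))
  · have hk : (0:ℝ) < (k:ℝ) + 1 := by positivity
    have ht : 0 ≤ x / ((k:ℝ) + 1) := by positivity
    have := Real.add_one_le_exp (x / ((k:ℝ)+1))
    have h2 := Real.log_le_sub_one_of_pos (show (0:ℝ) < 1 + x / ((k:ℝ)+1) by linarith)
    linarith
  · have hk : (0:ℝ) < (k:ℝ) + 1 := by positivity
    set t := x / ((k:ℝ) + 1) with htdef
    have ht : 0 ≤ t := by positivity
    have hlb := log_one_add_ge ht
    have key : t - t / (1 + t) ≤ t ^ 2 := by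
      rw [sub_div' (by positivity : (1:ℝ) + t ≠ 0)]
      rw [div_le_iff₀ (by linarith)]
      nlinarith
    have ht2 : t ^ 2 ≤ x ^ 2 * (1 / ((k:ℝ)+1)^2) := by
      rw [htdef, div_pow]
      rw [div_eq_mul_one_div]
    linarith

lemma hasSum_telescope' {f : ℕ → ℝ} {l : ℝ} (hm : ∀ k, f (k + 1) ≤ f k)
    (hl : Tendsto f atTop (𝓝 l)) : HasSum (fun k => f k - f (k + 1)) (f 0 - l) := by
  rw [hasSum_iff_tendsto_nat_of_nonneg (fun k => sub_nonneg.2 (hm k))]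
  simp only [Finset.sum_range_sub' f]
  exact tendsto_const_nhds.sub hl

lemma tendsto_one_div_shift (c : ℝ) (p : ℕ) (hp : p ≠ 0) :
    Tendsto (fun k : ℕ => 1 / (c + (k : ℝ)) ^ p) atTop (𝓝 0) := by
  have h1 : Tendsto (fun k : ℕ => c + (k : ℝ)) atTop atTop :=
    tendsto_atTop_add_const_left _ c tendsto_natCast_atTop_atTop
  have h2 : Tendsto (fun k : ℕ => (c + (k : ℝ)) ^ p) atTop atTop :=
    (tendsto_pow_atTop hp).comp h1
  simp only [one_div]
  exact h2.inv_tendsto_atTop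

lemma hasSum_tel_one {x : ℝ} (hx : 0 < x) :
    HasSum (fun k : ℕ => 1 / (x + (k : ℝ) + 1) - 1 / (x + ((k : ℝ) + 1) + 1)) (1 / (x + 1)) := by
  have := hasSum_telescope' (f := fun k : ℕ => 1 / (x + (k : ℝ) + 1)) (l := 0)
    (fun k => by
      have h1 : (0:ℝ) < x + (k:ℝ) + 1 := by positivity
      push_cast
      gcongr <;> linarith)
    (by
      have := tendsto_one_div_shift (x + 1) 1 one_ne_zero
      simp only [pow_one] at this
      convert this using 2 with k
      ring)
  simpa using this

lemma phiF_ge {x : ℝ} (hx : 0 < x) : 1 / (x + 1) ≤ phiF x := by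
  refine hasSum_le (fun k => ?_) (hasSum_tel_one hx) (summable_S hx.le 2 le_rfl).hasSum
  have h1 : (0:ℝ) < x + (k:ℝ) + 1 := by positivity
  have h2 : (0:ℝ) < x + ((k:ℝ) + 1) + 1 := by positivity
  have heq : 1 / (x + (k:ℝ) + 1) - 1 / (x + ((k:ℝ) + 1) + 1)
      = 1 / ((x + (k:ℝ) + 1) * (x + (k:ℝ) + 2)) := by
    rw [div_sub_div _ _ h1.ne' h2.ne']
    congr 1
    · ring
    · ring
  rw [heq]
  apply div_le_div_of_nonneg_left (by norm_num) (by positivity)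
  nlinarith

lemma cube_sum_le {x : ℝ} (hx : 0 < x) :
    (∑' k : ℕ, 1 / (x + (k : ℝ) + 1) ^ 3) ≤ 1 / (2 * (x + 1/2) ^ 2) := by
  have htel : HasSum (fun k : ℕ => 1 / (2 * (x + (k : ℝ) + 1/2) ^ 2)
      - 1 / (2 * (x + ((k : ℝ) + 1) + 1/2) ^ 2)) (1 / (2 * (x + 1/2) ^ 2)) := by
    have := hasSum_telescope' (f := fun k : ℕ => 1 / (2 * (x + (k : ℝ) + 1/2) ^ 2)) (l := 0)
      (fun k => by
        have h1 : (0:ℝ) < x + (k:ℝ) + 1/2 := by positivity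
        push_cast
        gcongr <;> linarith)
      (by
        have h2 := (tendsto_one_div_shift (x + 1/2) 2 two_ne_zero).const_mul (1/2 : ℝ)
        rw [mul_zero] at h2
        refine h2.congr fun k => ?_
        have hb : x + 1/2 + (k:ℝ) = x + (k:ℝ) + 1/2 := by ring
        rw [hb, one_div, one_div, one_div, ← mul_inv])
    simpa using this
  refine hasSum_le (fun k => ?_) (summable_S hx.le 3 (by norm_num)).hasSum htel
  set A : ℝ := x + (k:ℝ) + 1 with hA
  have hA1 : 1 < A := by
    have : (0:ℝ) ≤ (k:ℝ) := Nat.cast_nonneg k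
    simp only [hA]; linarith
  have e1 : x + (k:ℝ) + 1/2 = A - 1/2 := by rw [hA]; ring
  have e2 : x + ((k:ℝ) + 1) + 1/2 = A + 1/2 := by rw [hA]; ring
  rw [e1, e2]
  clear_value A
  clear hA e1 e2
  have h1 : (0:ℝ) < A - 1/2 := by linarith
  have h2 : (0:ℝ) < A + 1/2 := by linarith
  have h4 : (0:ℝ) < A^2 - 1/4 := by nlinarith
  have expand : 1 / (2 * (A - 1/2) ^ 2) - 1 / (2 * (A + 1/2) ^ 2) = A / (A^2 - 1/4)^2 := by
    have hn1 : (A - 1/2) ≠ 0 := h1.ne'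
    have hn2 : (A + 1/2) ≠ 0 := h2.ne'
    have hn3 : (A^2 - 1/4) ≠ 0 := h4.ne'
    rw [div_sub_div _ _ (mul_ne_zero two_ne_zero (pow_ne_zero 2 hn1))
      (mul_ne_zero two_ne_zero (pow_ne_zero 2 hn2)),
      div_eq_div_iff (by positivity) (pow_pos h4 2).ne']
    ring
  rw [expand, div_le_div_iff₀ (by positivity) (pow_pos h4 2)]
  nlinarith [sq_nonneg A, mul_pos h4 h4]

lemma summable_u3 : Summable (fun k : ℕ => 2 / ((k:ℝ) + 1) ^ 3) :=
  ((summable_base 3 (by norm_num)).mul_left 2).congr (fun k => by ring)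

lemma hasDerivAt_phiF {x : ℝ} (hx : 0 < x) : HasDerivAt phiF (phiF' x) x := by
  have hxm : x ∈ Ioo (0:ℝ) (x + 1) := ⟨hx, by linarith⟩
  have := hasDerivAt_tsum_of_isPreconnected (u := fun k : ℕ => 2 / ((k:ℝ) + 1) ^ 3)
    (g := fun (k : ℕ) (y : ℝ) => 1 / (y + (k:ℝ) + 1) ^ 2)
    (g' := fun (k : ℕ) (y : ℝ) => -2 / (y + (k:ℝ) + 1) ^ 3)
    summable_u3 isOpen_Ioo (convex_Ioo (0:ℝ) (x+1)).isPreconnected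
    (fun k y hy => ?_) (fun k y hy => ?_) hxm (summable_S hx.le 2 le_rfl) hxm
  · exact this
  · -- HasDerivAt (fun y => 1 / (y + k + 1) ^ 2) (-2 / (y + k + 1) ^ 3) y
    have hy0 : (0:ℝ) < y + (k:ℝ) + 1 := by
      have := Nat.cast_nonneg (α := ℝ) k; have := hy.1; linarith
    have hb : HasDerivAt (fun z : ℝ => z + (k:ℝ) + 1) 1 y :=
      ((hasDerivAt_id y).add_const ((k:ℝ))).add_const 1
    have hp : HasDerivAt (fun z : ℝ => (z + (k:ℝ) + 1) ^ 2)
        (2 * (y + (k:ℝ) + 1) ^ 1 * 1) y := hb.pow 2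
    have hinv := hp.inv (by positivity)
    have : -(2 * (y + (k:ℝ) + 1) ^ 1 * 1) / ((y + (k:ℝ) + 1) ^ 2) ^ 2
        = -2 / (y + (k:ℝ) + 1) ^ 3 := by
      rw [div_eq_div_iff (by positivity) (by positivity)]
      ring
    rw [this] at hinv
    simp only [one_div]
    exact hinv
  · -- bound
    have hy0 : (0:ℝ) < y + (k:ℝ) + 1 := by
      have := Nat.cast_nonneg (α := ℝ) k; have := hy.1; linarith
    have hk1 : (0:ℝ) < (k:ℝ) + 1 := by positivity
    show ‖-2 / (y + (k:ℝ) + 1) ^ 3‖ ≤ 2 / ((k:ℝ) + 1) ^ 3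
    rw [show (-2 : ℝ) / (y + (k:ℝ) + 1) ^ 3 = -(2 / (y + (k:ℝ) + 1) ^ 3) by ring,
      norm_neg, Real.norm_of_nonneg (by positivity)]
    apply div_le_div_of_nonneg_left (by norm_num) (by positivity)
    have hky : (k:ℝ) + 1 ≤ y + (k:ℝ) + 1 := by have := hy.1; linarith
    exact pow_le_pow_left₀ hk1.le hky 3

lemma hasDerivAt_PsiF {x : ℝ} (hx : 0 < x) : HasDerivAt PsiF (phiF x) x := by
  have hxm : x ∈ Ioo (0:ℝ) (x + 1) := ⟨hx, by linarith⟩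
  have H := hasDerivAt_tsum_of_isPreconnected (u := fun k : ℕ => 1 / ((k:ℝ) + 1) ^ 2)
    (g := fun (k : ℕ) (y : ℝ) => 1 / ((k:ℝ) + 1) - 1 / (y + (k:ℝ) + 1))
    (g' := fun (k : ℕ) (y : ℝ) => 1 / (y + (k:ℝ) + 1) ^ 2)
    (summable_base 2 le_rfl) isOpen_Ioo (convex_Ioo (0:ℝ) (x+1)).isPreconnected
    (fun k y hy => ?_) (fun k y hy => ?_) hxm (summable_SPsi hx.le) hxm
  · have := H.const_add (-γ)
    show HasDerivAt (fun y : ℝ => -γ + ∑' k : ℕ, (1 / ((k:ℝ) + 1) - 1 / (y + (k:ℝ) + 1)))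
      (∑' k : ℕ, 1 / (x + (k:ℝ) + 1) ^ 2) x
    simpa [one_div] using this
  · have hy0 : (0:ℝ) < y + (k:ℝ) + 1 := by
      have := Nat.cast_nonneg (α := ℝ) k; have := hy.1; linarith
    have hb : HasDerivAt (fun z : ℝ => z + (k:ℝ) + 1) 1 y :=
      ((hasDerivAt_id y).add_const ((k:ℝ))).add_const 1
    have hinv := hb.inv hy0.ne'
    have h2 := hinv.const_sub (1 / ((k:ℝ) + 1))
    have hval : -(-1 / (y + (k:ℝ) + 1) ^ 2) = 1 / (y + (k:ℝ) + 1) ^ 2 := by ring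
    rw [hval] at h2
    simpa [one_div] using h2
  · have hy0 : (0:ℝ) < y + (k:ℝ) + 1 := by
      have := Nat.cast_nonneg (α := ℝ) k; have := hy.1; linarith
    have hk1 : (0:ℝ) < (k:ℝ) + 1 := by positivity
    show ‖1 / (y + (k:ℝ) + 1) ^ 2‖ ≤ 1 / ((k:ℝ) + 1) ^ 2
    rw [Real.norm_of_nonneg (by positivity)]
    apply div_le_div_of_nonneg_left (by norm_num) (by positivity)
    have hky : (k:ℝ) + 1 ≤ y + (k:ℝ) + 1 := by have := hy.1; linarith
    exact pow_le_pow_left₀ hk1.le hky 2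

lemma hasDerivAt_WF {x : ℝ} (hx : 0 < x) : HasDerivAt WF (PsiF x) x := by
  have hxm : x ∈ Ioo (0:ℝ) (x + 1) := ⟨hx, by linarith⟩
  have H := hasDerivAt_tsum_of_isPreconnected
    (u := fun k : ℕ => (x + 1) * (1 / ((k:ℝ) + 1) ^ 2))
    (g := fun (k : ℕ) (y : ℝ) => y / ((k:ℝ) + 1) - Real.log (1 + y / ((k:ℝ) + 1)))
    (g' := fun (k : ℕ) (y : ℝ) => 1 / ((k:ℝ) + 1) - 1 / (y + (k:ℝ) + 1))
    ((summable_base 2 le_rfl).mul_left (x+1)) isOpen_Ioo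
    (convex_Ioo (0:ℝ) (x+1)).isPreconnected
    (fun k y hy => ?_) (fun k y hy => ?_) hxm (summable_SW hx.le) hxm
  · have hlin : HasDerivAt (fun y : ℝ => -γ * y) (-γ) x := by
      simpa using (hasDerivAt_id x).const_mul (-γ)
    have := hlin.add H
    show HasDerivAt (fun y : ℝ =>
      -γ * y + ∑' k : ℕ, (y / ((k:ℝ) + 1) - Real.log (1 + y / ((k:ℝ) + 1))))
      (-γ + ∑' k : ℕ, (1 / ((k:ℝ) + 1) - 1 / (x + (k:ℝ) + 1))) x
    exact this
  · -- HasDerivAt of each term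
    have hk1 : (0:ℝ) < (k:ℝ) + 1 := by positivity
    have hy0 : 0 < y := hy.1
    have hyk : (0:ℝ) < y + (k:ℝ) + 1 := by linarith
    have hne : 1 + y / ((k:ℝ) + 1) ≠ 0 := by positivity
    have hdiv : HasDerivAt (fun z : ℝ => z / ((k:ℝ) + 1)) (1 / ((k:ℝ) + 1)) y := by
      simpa [one_div] using (hasDerivAt_id y).div_const ((k:ℝ) + 1)
    have hlog := (hdiv.const_add 1).log hne
    have e : (1 / ((k:ℝ) + 1)) / (1 + y / ((k:ℝ) + 1)) = 1 / (y + (k:ℝ) + 1) := by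
      rw [div_eq_div_iff (by positivity) hyk.ne']
      field_simp
      ring
    rw [e] at hlog
    exact hdiv.sub hlog
  · -- bound
    have hk1 : (0:ℝ) < (k:ℝ) + 1 := by positivity
    have hy0 : 0 < y := hy.1
    have hyk : (0:ℝ) < y + (k:ℝ) + 1 := by linarith
    show ‖1 / ((k:ℝ) + 1) - 1 / (y + (k:ℝ) + 1)‖ ≤ (x + 1) * (1 / ((k:ℝ) + 1) ^ 2)
    have hmono : 1 / (y + (k:ℝ) + 1) ≤ 1 / ((k:ℝ) + 1) := by
      apply div_le_div_of_nonneg_left (by norm_num) hk1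
      linarith
    rw [Real.norm_of_nonneg (sub_nonneg.2 hmono), div_sub_div _ _ hk1.ne' hyk.ne',
      mul_one_div]
    have hnum : 1 * (y + (k:ℝ) + 1) - ((k:ℝ) + 1) * 1 = y := by ring
    rw [hnum]
    gcongr
    · linarith [hy.2]
    · nlinarith

lemma phiF_pos {x : ℝ} (hx : 0 < x) : 0 < phiF x :=
  lt_of_lt_of_le (by positivity) (phiF_ge hx)

lemma Gderiv_pos {x : ℝ} (hx : 0 < x) : 0 < phiF x + x * phiF' x := by
  have e : phiF' x = -2 * ∑' k : ℕ, 1 / (x + (k:ℝ) + 1) ^ 3 := by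
    rw [phiF', ← tsum_mul_left]
    congr 1 with k
    ring
  have h1 := phiF_ge hx
  have h2 := cube_sum_le hx
  have hS3pos : (0:ℝ) ≤ ∑' k : ℕ, 1 / (x + (k:ℝ) + 1) ^ 3 :=
    tsum_nonneg fun k => by positivity
  have key : x * (1 / (2 * (x + 1/2) ^ 2)) * 2 < 1 / (x + 1) := by
    rw [mul_one_div, div_mul_eq_mul_div, div_lt_div_iff₀ (by positivity) (by positivity)]
    nlinarith
  have h3 : x * (∑' k : ℕ, 1 / (x + (k:ℝ) + 1) ^ 3) ≤ x * (1 / (2 * (x + 1/2) ^ 2)) :=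
    mul_le_mul_of_nonneg_left h2 hx.le
  rw [e]
  nlinarith

lemma G_strictMono : StrictMonoOn (fun t : ℝ => t * phiF t) (Ioi 0) := by
  apply strictMonoOn_of_deriv_pos (convex_Ioi 0)
  · intro t ht
    exact (((hasDerivAt_id t).mul (hasDerivAt_phiF ht)).continuousAt).continuousWithinAt
  · intro t ht
    rw [interior_Ioi] at ht
    have hd : HasDerivAt (fun t : ℝ => t * phiF t) (1 * phiF t + t * phiF' t) t :=
      (hasDerivAt_id t).mul (hasDerivAt_phiF ht)
    rw [hd.deriv, one_mul]
    exact Gderiv_pos ht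

lemma PsiF_one : PsiF 1 = 1 - γ := by
  have htel : HasSum (fun k : ℕ => 1 / ((k:ℝ) + 1) - 1 / (1 + (k:ℝ) + 1)) 1 := by
    have h0 : Tendsto (fun k : ℕ => 1 / ((k:ℝ) + 1)) atTop (𝓝 0) := by
      have := tendsto_one_div_shift 1 1 one_ne_zero
      refine this.congr fun k => ?_
      rw [pow_one, add_comm]
    have hts := hasSum_telescope' (f := fun k : ℕ => 1 / ((k:ℝ) + 1)) (l := 0)
      (fun k => by
        have : (0:ℝ) < (k:ℝ) + 1 := by positivity
        push_cast
        gcongr <;> linarith)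
      h0
    have hfun : (fun k : ℕ => 1 / ((k:ℝ) + 1) - 1 / (1 + (k:ℝ) + 1)) =
        (fun k : ℕ => 1 / ((k:ℝ) + 1) - 1 / (((k + 1 : ℕ) : ℝ) + 1)) := by
      funext k
      push_cast
      ring_nf
    rw [hfun]
    simpa using hts
  have e : PsiF 1 = -γ + ∑' k : ℕ, (1 / ((k:ℝ) + 1) - 1 / (1 + (k:ℝ) + 1)) := rfl
  rw [e, htel.tsum_eq]
  ring

lemma phiF_one_gt : 1 - γ < phiF 1 := by
  have hsum : (∑ k ∈ Finset.range 6, 1 / ((1:ℝ) + (k:ℝ) + 1) ^ 2) ≤ phiF 1 :=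
    Summable.sum_le_tsum _ (fun i _ => by positivity) (summable_S (by norm_num) 2 le_rfl)
  have hval : (∑ k ∈ Finset.range 6, 1 / ((1:ℝ) + (k:ℝ) + 1) ^ 2) > 1/2 := by
    simp only [Finset.sum_range_succ, Finset.sum_range_zero]
    norm_num
  have := Real.one_half_lt_eulerMascheroniConstant
  linarith

lemma PsiF_strictMono : StrictMonoOn PsiF (Ioi 0) := by
  apply strictMonoOn_of_deriv_pos (convex_Ioi 0)
  · intro t ht
    exact (hasDerivAt_PsiF ht).continuousAt.continuousWithinAt
  · intro t ht
    rw [interior_Ioi] at ht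
    rw [(hasDerivAt_PsiF ht).deriv]
    exact phiF_pos ht

lemma PsiF_lt {x : ℝ} (hx : 1 < x) : PsiF x < x * phiF x * (1 + Real.log x) := by
  have h0x : (0:ℝ) < x := by linarith
  have hcont : ∀ a b : ℝ, (1:ℝ) ≤ a → a ≤ b → IntervalIntegrable phiF MeasureTheory.volume a b := by
    intro a b ha hab
    apply ContinuousOn.intervalIntegrable
    intro t ht
    rw [uIcc_of_le hab] at ht
    exact (hasDerivAt_phiF (by linarith [ht.1])).continuousAt.continuousWithinAt
  have hftc : ∫ t in (1:ℝ)..x, phiF t = PsiF x - PsiF 1 := by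
    apply intervalIntegral.integral_eq_sub_of_hasDerivAt
    · intro t ht
      rw [uIcc_of_le hx.le] at ht
      exact hasDerivAt_PsiF (by linarith [ht.1])
    · exact hcont 1 x le_rfl hx.le
  have hmono := G_strictMono.monotoneOn
  have hbound : ∫ t in (1:ℝ)..x, phiF t ≤ ∫ t in (1:ℝ)..x, (x * phiF x) * t⁻¹ := by
    apply intervalIntegral.integral_mono_on hx.le (hcont 1 x le_rfl hx.le)
    · apply ContinuousOn.intervalIntegrable
      apply ContinuousOn.mul continuousOn_const
      intro t ht
      rw [uIcc_of_le hx.le] at ht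
      exact (continuousAt_inv₀ (by linarith [ht.1] : t ≠ 0)).continuousWithinAt
    · intro t ht
      have h0t : (0:ℝ) < t := by linarith [ht.1]
      have hGt : t * phiF t ≤ x * phiF x :=
        hmono (mem_Ioi.2 h0t) (mem_Ioi.2 h0x) ht.2
      rw [← div_eq_mul_inv, le_div_iff₀ h0t]
      linarith [hGt]
  have hint : ∫ t in (1:ℝ)..x, (x * phiF x) * t⁻¹ = x * phiF x * Real.log x := by
    rw [intervalIntegral.integral_const_mul, integral_inv_of_pos one_pos h0x]
    rw [div_one]
  have hG1 : 1 * phiF 1 ≤ x * phiF x := (G_strictMono (mem_Ioi.2 one_pos) (mem_Ioi.2 h0x) hx).le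
  have hphi1 := phiF_one_gt
  have hlog : 0 ≤ Real.log x := Real.log_nonneg hx.le
  have hPsi1 := PsiF_one
  nlinarith [hftc, hbound, hint]

lemma r1_strictMono : StrictMonoOn (fun x : ℝ => PsiF x / (Real.log x + 1)) (Ioi 1) := by
  apply strictMonoOn_of_deriv_pos (convex_Ioi 1)
  · intro x hx
    have h0x : (0:ℝ) < x := by have := mem_Ioi.1 hx; linarith
    have hpos : 0 < Real.log x + 1 := by
      have := Real.log_pos (mem_Ioi.1 hx)
      linarith
    exact (((hasDerivAt_PsiF h0x).div ((Real.hasDerivAt_log h0x.ne').add_const 1)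
      hpos.ne').continuousAt).continuousWithinAt
  · intro x hx
    rw [interior_Ioi] at hx
    have hx1 : 1 < x := hx
    have h0x : (0:ℝ) < x := by linarith
    have hpos : 0 < Real.log x + 1 := by
      have := Real.log_pos hx1
      linarith
    have hd := (hasDerivAt_PsiF h0x).div ((Real.hasDerivAt_log h0x.ne').add_const 1) hpos.ne'
    rw [show (fun x => PsiF x / (Real.log x + 1)) = (PsiF / fun x => Real.log x + 1) from rfl, hd.deriv]
    apply div_pos ?_ (pow_pos hpos 2)
    have hkey := PsiF_lt hx1
    rw [sub_pos, ← div_eq_mul_inv, div_lt_iff₀ h0x]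
    nlinarith

lemma log_Gamma_eq_WF {x : ℝ} (hx : 0 < x) : Real.log (Real.Gamma (x + 1)) = WF x := by
  have hnonneg : ∀ k : ℕ, 0 ≤ x / ((k:ℝ)+1) - Real.log (1 + x / ((k:ℝ)+1)) := by
    intro k
    have hk : (0:ℝ) < (k:ℝ) + 1 := by positivity
    have ht : 0 ≤ x / ((k:ℝ) + 1) := by positivity
    have h2 := Real.log_le_sub_one_of_pos (show (0:ℝ) < 1 + x / ((k:ℝ)+1) by linarith)
    linarith
  have key : Tendsto (fun n : ℕ => ∑ k ∈ Finset.range n,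
      (x / ((k:ℝ)+1) - Real.log (1 + x / ((k:ℝ)+1)))) atTop
      (𝓝 (Real.log (Real.Gamma (x+1)) + x * γ)) := by
    have h1 : Tendsto (fun n : ℕ => Real.log (Real.GammaSeq (x+1) n)) atTop
        (𝓝 (Real.log (Real.Gamma (x+1)))) :=
      (Real.GammaSeq_tendsto_Gamma (x+1)).log (Real.Gamma_pos_of_pos (by linarith)).ne'
    have h2 : Tendsto (fun n : ℕ => x * ((harmonic n : ℝ) - Real.log n)) atTop (𝓝 (x * γ)) :=
      Real.tendsto_harmonic_sub_log.const_mul x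
    have h3 : Tendsto (fun n : ℕ => Real.log (1 + (x+1) * (1/(n:ℝ)))) atTop (𝓝 0) := by
      have hb : Tendsto (fun n : ℕ => 1 + (x+1) * (1/(n:ℝ))) atTop (𝓝 1) := by
        have h4 := tendsto_one_div_atTop_nhds_zero_nat.const_mul (x+1)
        rw [mul_zero] at h4
        have h5 := (tendsto_const_nhds (x := (1:ℝ)) (f := atTop (α := ℕ))).add h4
        rw [add_zero] at h5
        exact h5
      have := hb.log one_ne_zero
      rw [Real.log_one] at this
      exact this
    have hcomb := (h1.add h2).add h3
    rw [add_zero] at hcomb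
    refine hcomb.congr' ?_
    filter_upwards [eventually_ge_atTop 1] with n hn
    have hn0 : (0:ℝ) < (n:ℝ) := by exact_mod_cast hn.trans_lt' Nat.zero_lt_one
    have hCpos : ∀ j ∈ Finset.range (n+1), (0:ℝ) < x + 1 + (j:ℝ) := by
      intro j _
      have : (0:ℝ) ≤ (j:ℝ) := Nat.cast_nonneg j
      linarith
    have hprod : (0:ℝ) < ∏ j ∈ Finset.range (n+1), (x + 1 + (j:ℝ)) :=
      Finset.prod_pos hCpos
    have hfac : (0:ℝ) < (n.factorial : ℝ) := by exact_mod_cast n.factorial_pos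
    have hrpow : (0:ℝ) < (n:ℝ) ^ (x+1) := Real.rpow_pos_of_pos hn0 _
    -- expand log GammaSeq
    have hGS : Real.log (Real.GammaSeq (x+1) n) =
        (x+1) * Real.log n + Real.log (n.factorial : ℝ)
          - ∑ j ∈ Finset.range (n+1), Real.log (x + 1 + (j:ℝ)) := by
      rw [Real.GammaSeq, Real.log_div (by positivity) hprod.ne',
        Real.log_mul hrpow.ne' hfac.ne', Real.log_rpow hn0,
        Real.log_prod (fun j hj => (hCpos j hj).ne')]
    have hsplit : ∑ j ∈ Finset.range (n+1), Real.log (x + 1 + (j:ℝ))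
        = (∑ k ∈ Finset.range n, Real.log (x + (k:ℝ) + 1)) + Real.log (x + (n:ℝ) + 1) := by
      rw [Finset.sum_range_succ]
      congr 1
      · exact Finset.sum_congr rfl fun j _ => by ring_nf
      · ring_nf
    have hH : ((harmonic n : ℚ) : ℝ) = ∑ k ∈ Finset.range n, 1/((k:ℝ)+1) := by
      rw [harmonic]
      push_cast
      simp [one_div]
    have hlogfac : (∑ k ∈ Finset.range n, Real.log ((k:ℝ)+1)) = Real.log (n.factorial : ℝ) := by
      rw [← Real.log_prod (fun k _ => by positivity)]
      congr 1
      have hcast : ∏ k ∈ Finset.range n, ((k:ℝ)+1)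
          = ((∏ k ∈ Finset.range n, (k+1) : ℕ) : ℝ) := by
        push_cast
        rfl
      rw [hcast, Finset.prod_range_add_one_eq_factorial]
    have hterm : ∀ k ∈ Finset.range n, x / ((k:ℝ)+1) - Real.log (1 + x/((k:ℝ)+1))
        = x * (1/((k:ℝ)+1)) - Real.log (x + (k:ℝ) + 1) + Real.log ((k:ℝ)+1) := by
      intro k _
      have hk : (0:ℝ) < (k:ℝ) + 1 := by positivity
      have hxk : (0:ℝ) < x + (k:ℝ) + 1 := by linarith
      have harg : 1 + x/((k:ℝ)+1) = (x + (k:ℝ) + 1)/((k:ℝ)+1) := by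
        field_simp
        ring
      rw [harg, Real.log_div hxk.ne' hk.ne', mul_one_div]
      ring
    have hsum : ∑ k ∈ Finset.range n, (x / ((k:ℝ)+1) - Real.log (1 + x/((k:ℝ)+1)))
        = x * ((harmonic n : ℝ)) - (∑ k ∈ Finset.range n, Real.log (x + (k:ℝ) + 1))
          + Real.log (n.factorial : ℝ) := by
      rw [Finset.sum_congr rfl hterm]
      rw [Finset.sum_add_distrib, Finset.sum_sub_distrib, hlogfac, ← Finset.mul_sum, hH]
    have hlast : Real.log (1 + (x+1) * (1/(n:ℝ)))
        = Real.log (x + (n:ℝ) + 1) - Real.log n := by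
      have harg : 1 + (x+1) * (1/(n:ℝ)) = (x + (n:ℝ) + 1)/(n:ℝ) := by
        field_simp
        ring
      rw [harg, Real.log_div (by linarith) hn0.ne']
    rw [hGS, hsplit, hsum, hlast]
    ring
  have hhs : HasSum (fun k : ℕ => x / ((k:ℝ)+1) - Real.log (1 + x/((k:ℝ)+1)))
      (Real.log (Real.Gamma (x+1)) + x * γ) :=
    (hasSum_iff_tendsto_nat_of_nonneg hnonneg _).2 key
  have e : WF x = -γ * x + ∑' k : ℕ, (x / ((k:ℝ)+1) - Real.log (1 + x/((k:ℝ)+1))) := rfl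
  rw [e, hhs.tsum_eq]
  ring

lemma hasDerivAt_logGamma {x : ℝ} (hx : 0 < x) :
    HasDerivAt (fun y : ℝ => Real.log (Real.Gamma (y + 1))) (PsiF x) x := by
  refine (hasDerivAt_WF hx).congr_of_eventuallyEq ?_
  exact Filter.eventuallyEq_of_mem (isOpen_Ioi.mem_nhds hx)
    (fun y hy => log_Gamma_eq_WF hy)

lemma logGamma_one : Real.log (Real.Gamma ((1:ℝ) + 1)) = 0 := by
  rw [show ((1:ℝ) + 1) = 2 by norm_num, Real.Gamma_two, Real.log_one]

lemma hasDerivAt_g {x : ℝ} (hx : 0 < x) :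
    HasDerivAt (fun y : ℝ => y * Real.log y) (Real.log x + 1) x := by
  have h := (hasDerivAt_id x).mul (Real.hasDerivAt_log hx.ne')
  simp only [id_eq] at h
  have e : 1 * Real.log x + x * x⁻¹ = Real.log x + 1 := by
    field_simp
  rwa [e] at h

lemma main_strictMono :
    StrictMonoOn (fun x : ℝ => Real.log (Real.Gamma (x + 1)) / (x * Real.log x)) (Ioi 1) := by
  apply strictMonoOn_of_deriv_pos (convex_Ioi 1)
  · intro x hx
    have hx1 : (1:ℝ) < x := hx
    have h0x : (0:ℝ) < x := by linarith
    have hlog : 0 < Real.log x := Real.log_pos hx1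
    have hg0 : x * Real.log x ≠ 0 := by positivity
    exact (((hasDerivAt_logGamma h0x).div (hasDerivAt_g h0x) hg0).continuousAt).continuousWithinAt
  · intro x hx
    rw [interior_Ioi] at hx
    have hx1 : (1:ℝ) < x := hx
    have h0x : (0:ℝ) < x := by linarith
    have hlog : 0 < Real.log x := Real.log_pos hx1
    have hgx : 0 < x * Real.log x := by positivity
    have hd := (hasDerivAt_logGamma h0x).div (hasDerivAt_g h0x) hgx.ne'
    rw [show (fun x => Real.log (Real.Gamma (x + 1)) / (x * Real.log x)) = ((fun y => Real.log (Real.Gamma (y + 1))) / fun y => y * Real.log y) from rfl, hd.deriv]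
    apply div_pos ?_ (by positivity)
    -- MVT
    obtain ⟨c, hc, hMVT⟩ := exists_ratio_hasDerivAt_eq_ratio_slope
      (fun y : ℝ => Real.log (Real.Gamma (y + 1))) (fun y => PsiF y) hx1
      (fun y hy => ((hasDerivAt_logGamma (by linarith [hy.1] : (0:ℝ) < y)).continuousAt).continuousWithinAt)
      (fun y hy => hasDerivAt_logGamma (by linarith [hy.1]))
      (fun y : ℝ => y * Real.log y) (fun y => Real.log y + 1)
      (fun y hy => ((hasDerivAt_g (by linarith [hy.1] : (0:ℝ) < y)).continuousAt).continuousWithinAt)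
      (fun y hy => hasDerivAt_g (by linarith [hy.1]))
    have hc1 : (1:ℝ) < c := hc.1
    have hcx : c < x := hc.2
    have hlogc : 0 < Real.log c + 1 := by
      have := Real.log_pos hc1
      linarith
    have hlogx1 : 0 < Real.log x + 1 := by linarith
    simp only [one_mul, Real.log_one, mul_zero, logGamma_one, sub_zero] at hMVT
    -- hMVT : (x * log x - 0) * PsiF c = (log Γ(x+1) - 0) * (log c + 1)
    have hr1 := r1_strictMono (mem_Ioi.2 hc1) (mem_Ioi.2 hx1) hcx
    rw [div_lt_div_iff₀ hlogc hlogx1] at hr1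
    -- hr1 : PsiF c * (log x + 1) < PsiF x * (log c + 1)
    have h5 : 0 < (x * Real.log x) * (PsiF x * (Real.log c + 1) - PsiF c * (Real.log x + 1)) :=
      mul_pos hgx (by linarith)
    nlinarith [hMVT, h5, hlogc]

lemma limit_one :
    Tendsto (fun x : ℝ => Real.log (Real.Gamma (x + 1)) / (x * Real.log x))
      (nhdsWithin 1 (Ioi 1)) (𝓝 (1 - γ)) := by
  have hF : HasDerivAt (fun y : ℝ => Real.log (Real.Gamma (y + 1))) (1 - γ) 1 := by
    have := hasDerivAt_logGamma one_pos
    rwa [PsiF_one] at this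
  have hg : HasDerivAt (fun y : ℝ => y * Real.log y) 1 1 := by
    have := hasDerivAt_g one_pos
    rwa [Real.log_one, zero_add] at this
  have hFs := hasDerivAt_iff_tendsto_slope.1 hF
  have hgs := hasDerivAt_iff_tendsto_slope.1 hg
  have hsub : 𝓝[>] (1:ℝ) ≤ 𝓝[≠] (1:ℝ) :=
    nhdsWithin_mono _ (fun y hy => ne_of_gt hy)
  have hdiv := (hFs.mono_left hsub).div (hgs.mono_left hsub) one_ne_zero
  rw [div_one] at hdiv
  refine hdiv.congr' ?_
  filter_upwards [self_mem_nhdsWithin] with y hy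
  have hy1 : (1:ℝ) < y := hy
  have hne : y - 1 ≠ 0 := sub_ne_zero.2 (ne_of_gt hy1)
  have e : ∀ a b c : ℝ, c ≠ 0 → (a/c)/(b/c) = a/b := by
    intro a b c hc
    rcases eq_or_ne b 0 with rfl | hb
    · simp
    · field_simp
  rw [Pi.div_apply, slope_def_field, slope_def_field, logGamma_one, sub_zero, Real.log_one,
    mul_zero, sub_zero, e _ _ _ hne]

lemma logfac_lower (n : ℕ) (hn : 1 ≤ n) :
    (n:ℝ) * Real.log n - n ≤ Real.log (n.factorial : ℝ) := by
  have hn0 : (0:ℝ) < n := by exact_mod_cast hn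
  have h := Real.pow_div_factorial_le_exp (x := (n:ℝ)) (by positivity) n
  have hfac : (0:ℝ) < (n.factorial : ℝ) := by exact_mod_cast n.factorial_pos
  have h2 : ((n:ℝ))^n ≤ Real.exp n * n.factorial := by
    rw [div_le_iff₀ hfac] at h
    linarith [h]
  have h3 := Real.log_le_log (by positivity) h2
  rw [Real.log_mul (Real.exp_ne_zero _) hfac.ne', Real.log_exp, Real.log_pow] at h3
  push_cast at h3 ⊢
  linarith

lemma logfac_upper (n : ℕ) : Real.log (n.factorial : ℝ) ≤ (n:ℝ) * Real.log n := by
  have hfac : (0:ℝ) < (n.factorial : ℝ) := by exact_mod_cast n.factorial_pos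
  have h : (n.factorial : ℝ) ≤ (n:ℝ)^n := by exact_mod_cast Nat.factorial_le_pow n
  have h2 := Real.log_le_log hfac h
  rwa [Real.log_pow] at h2

lemma logGamma_mono : MonotoneOn (fun y : ℝ => Real.log (Real.Gamma (y + 1))) (Ici 1) := by
  apply monotoneOn_of_deriv_nonneg (convex_Ici 1)
  · intro y hy
    have h0y : (0:ℝ) < y := lt_of_lt_of_le one_pos hy
    exact (hasDerivAt_logGamma h0y).continuousAt.continuousWithinAt
  · intro y hy
    rw [interior_Ici] at hy
    have h0y : (0:ℝ) < y := by have : (1:ℝ) < y := hy; linarith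
    exact (hasDerivAt_logGamma h0y).differentiableAt.differentiableWithinAt
  · intro y hy
    rw [interior_Ici] at hy
    have hy1 : (1:ℝ) < y := hy
    have h0y : (0:ℝ) < y := by linarith
    rw [(hasDerivAt_logGamma h0y).deriv]
    have h1 := PsiF_strictMono (mem_Ioi.2 one_pos) (mem_Ioi.2 h0y) hy1
    rw [PsiF_one] at h1
    have := Real.eulerMascheroniConstant_lt_two_thirds
    linarith

lemma logGamma_nat (n : ℕ) :
    Real.log (Real.Gamma ((n:ℝ) + 1)) = Real.log (n.factorial : ℝ) := by
  rw [Real.Gamma_nat_eq_factorial]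

lemma tlogt_mono : MonotoneOn (fun t : ℝ => t * Real.log t) (Ici 1) := by
  apply monotoneOn_of_deriv_nonneg (convex_Ici 1)
  · intro t ht
    have h0t : (0:ℝ) < t := lt_of_lt_of_le one_pos ht
    exact (hasDerivAt_g h0t).continuousAt.continuousWithinAt
  · intro t ht
    rw [interior_Ici] at ht
    have h0t : (0:ℝ) < t := by have : (1:ℝ) < t := ht; linarith
    exact (hasDerivAt_g h0t).differentiableAt.differentiableWithinAt
  · intro t ht
    rw [interior_Ici] at ht
    have ht1 : (1:ℝ) < t := ht
    have h0t : (0:ℝ) < t := by linarith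
    rw [(hasDerivAt_g h0t).deriv]
    have := Real.log_nonneg ht1.le
    linarith

lemma F_bounds {x : ℝ} (hx : 2 ≤ x) :
    (x - 1) * Real.log (x - 1) - x ≤ Real.log (Real.Gamma (x + 1)) ∧
    Real.log (Real.Gamma (x + 1)) ≤ (x + 1) * Real.log (x + 1) := by
  set n := ⌊x⌋₊ with hn
  have hn2 : 2 ≤ n := Nat.le_floor (by exact_mod_cast hx)
  have hn2' : (2:ℝ) ≤ (n:ℝ) := by exact_mod_cast hn2
  have hnx : (n:ℝ) ≤ x := Nat.floor_le (by linarith)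
  have hxn : x < n + 1 := Nat.lt_floor_add_one x
  constructor
  · have h1 : Real.log (Real.Gamma ((n:ℝ) + 1)) ≤ Real.log (Real.Gamma (x + 1)) :=
      logGamma_mono (mem_Ici.2 (by linarith)) (mem_Ici.2 (by linarith)) hnx
    rw [logGamma_nat] at h1
    have h2 := logfac_lower n (by omega)
    have h3 : (x - 1) * Real.log (x - 1) ≤ (n:ℝ) * Real.log (n:ℝ) :=
      tlogt_mono (mem_Ici.2 (by linarith)) (mem_Ici.2 (by linarith)) (by linarith)
    linarith
  · have h1 : Real.log (Real.Gamma (x + 1)) ≤ Real.log (Real.Gamma (((n+1:ℕ):ℝ) + 1)) := by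
      apply logGamma_mono (mem_Ici.2 (by linarith)) (mem_Ici.2 ?_) ?_
      · push_cast
        linarith
      · push_cast
        linarith
    rw [logGamma_nat] at h1
    have h2 := logfac_upper (n + 1)
    have h3 : ((n+1:ℕ):ℝ) * Real.log ((n+1:ℕ):ℝ) ≤ (x + 1) * Real.log (x + 1) := by
      apply tlogt_mono (mem_Ici.2 ?_) (mem_Ici.2 (by linarith)) ?_
      · push_cast
        linarith
      · push_cast
        linarith
    linarith

lemma tendsto_one_add_div (c : ℝ) : Tendsto (fun x : ℝ => 1 + c / x) atTop (𝓝 1) := by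
  have h0 := tendsto_inv_atTop_zero.const_mul c
  rw [mul_zero] at h0
  have h2 := (tendsto_const_nhds (x := (1:ℝ)) (f := atTop (α := ℝ))).add h0
  rw [add_zero] at h2
  refine h2.congr fun x => ?_
  rw [div_eq_mul_inv]

lemma tendsto_shift_ratio (c : ℝ) : Tendsto (fun x : ℝ => (x + c) / x) atTop (𝓝 1) := by
  refine (tendsto_one_add_div c).congr' ?_
  filter_upwards [eventually_gt_atTop 0] with x hx
  field_simp

lemma tendsto_log_shift (c : ℝ) :
    Tendsto (fun x : ℝ => Real.log (x + c) / Real.log x) atTop (𝓝 1) := by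
  have h1 : Tendsto (fun x : ℝ => Real.log (1 + c / x)) atTop (𝓝 0) := by
    have := (tendsto_one_add_div c).log one_ne_zero
    rwa [Real.log_one] at this
  have h2 : Tendsto (fun x : ℝ => (Real.log x)⁻¹) atTop (𝓝 0) :=
    Real.tendsto_log_atTop.inv_tendsto_atTop
  have h3 := h1.mul h2
  rw [mul_zero] at h3
  have h4 := (tendsto_const_nhds (x := (1:ℝ)) (f := atTop (α := ℝ))).add h3
  rw [add_zero] at h4
  refine h4.congr' ?_
  filter_upwards [eventually_gt_atTop (max 1 (1 + |c|))] with x hxgt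
  have hx1 : 1 < x := lt_of_le_of_lt (le_max_left _ _) hxgt
  have hxc' : 1 + |c| < x := lt_of_le_of_lt (le_max_right _ _) hxgt
  have h0x : (0:ℝ) < x := by linarith
  have habs : -|c| ≤ c := neg_abs_le c
  have hcx : |c| / x < 1 := by
    rw [div_lt_one h0x]
    linarith
  have hge : -(|c| / x) ≤ c / x := by
    rw [← neg_div]
    exact (div_le_div_iff_of_pos_right h0x).2 habs
  have hxc : 0 < 1 + c / x := by linarith
  have hlogx : Real.log x ≠ 0 := (Real.log_pos hx1).ne'
  have e : x + c = x * (1 + c / x) := by field_simp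
  rw [e, Real.log_mul h0x.ne' hxc.ne', add_div, div_self hlogx]
  ring

lemma limit_top :
    Tendsto (fun x : ℝ => Real.log (Real.Gamma (x + 1)) / (x * Real.log x)) atTop (𝓝 1) := by
  have hU : Tendsto (fun x : ℝ => ((x+1) * Real.log (x+1)) / (x * Real.log x)) atTop (𝓝 1) := by
    have h := (tendsto_shift_ratio 1).mul (tendsto_log_shift 1)
    rw [mul_one] at h
    refine h.congr fun x => ?_
    rw [mul_div_mul_comm]
  have hL : Tendsto (fun x : ℝ => ((x-1) * Real.log (x-1) - x) / (x * Real.log x)) atTop (𝓝 1) := by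
    have h1 := (tendsto_shift_ratio (-1)).mul (tendsto_log_shift (-1))
    rw [mul_one] at h1
    have h2 : Tendsto (fun x : ℝ => (Real.log x)⁻¹) atTop (𝓝 0) :=
      Real.tendsto_log_atTop.inv_tendsto_atTop
    have h3 := h1.sub h2
    rw [sub_zero] at h3
    refine h3.congr' ?_
    filter_upwards [eventually_gt_atTop 1] with x hx1
    have h0x : (0:ℝ) < x := lt_trans one_pos hx1
    have hlogx : Real.log x ≠ 0 := (Real.log_pos hx1).ne'
    have e : x + -1 = x - 1 := by ring
    rw [e]
    field_simp
  refine tendsto_of_tendsto_of_tendsto_of_le_of_le' hL hU ?_ ?_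
  · filter_upwards [eventually_ge_atTop 2] with x hx
    have hlog : 0 < Real.log x := Real.log_pos (by linarith)
    exact (div_le_div_iff_of_pos_right (by positivity)).2 (F_bounds hx).1
  · filter_upwards [eventually_ge_atTop 2] with x hx
    have hlog : 0 < Real.log x := Real.log_pos (by linarith)
    exact (div_le_div_iff_of_pos_right (by positivity)).2 (F_bounds hx).2

theorem log_gamma_div_strictMono :
    StrictMonoOn (fun x : ℝ => Real.log (Real.Gamma (x + 1)) / (x * Real.log x))
      (Set.Ioi 1) ∧
    Filter.Tendsto (fun x : ℝ => Real.log (Real.Gamma (x + 1)) / (x * Real.log x))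
      (nhdsWithin 1 (Set.Ioi 1)) (nhds (1 - Real.eulerMascheroniConstant)) ∧
    Filter.Tendsto (fun x : ℝ => Real.log (Real.Gamma (x + 1)) / (x * Real.log x))
      Filter.atTop (nhds 1) :=
  ⟨main_strictMono, limit_one, limit_top⟩
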